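/- For a complex matrix H ∈ M_N(𝕋) with unimodular entries, the moments of |Ω|², where Ω(a,b) = Σ_{ij} a_i b_j H_{ij} with (a,b) Haar-uniform on 𝕋^N × 𝕋^N, are given by ∫ |Ω|^{2p} = Σ_{[i]=[j], [x]=[y]} (H_{i_1x_1}⋯H_{i_px_p})/(H_{j_1y_1}⋯H_{j_py_p}), where the sum is over multi-indices i,j,x,y ∈ {1,…,N}^p with [i]=[j] and [x]=[y] as multisets. -/

import Mathlib

open Finset MeasureTheory

/-- The point `e(u) = exp(2πiu)` of the unit circle. -/
noncomputable def e (u : ℝ) : ℂ := Complex.exp (2 * Real.pi * u * Complex.I)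

/-- The cube `[0,1]^N`, parametrizing `𝕋^N` with its Haar probability measure. -/
def Box (N : ℕ) : Set (Fin N → ℝ) := Set.univ.pi fun _ => Set.Icc 0 1

lemma e_ne_zero (u : ℝ) : e u ≠ 0 := Complex.exp_ne_zero _

@[fun_prop]
lemma continuous_e : Continuous e := by unfold e; fun_prop

lemma e_zero : e 0 = 1 := by simp [e]

lemma e_add (u v : ℝ) : e (u + v) = e u * e v := by
  unfold e; rw [← Complex.exp_add]; push_cast; ring_nf

lemma e_neg (u : ℝ) : e (-u) = (e u)⁻¹ := by
  refine eq_inv_of_mul_eq_one_left ?_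
  rw [← e_add]; simp [e_zero]

lemma conj_e (u : ℝ) : (starRingEnd ℂ) (e u) = e (-u) := by
  unfold e; rw [← Complex.exp_conj]; congr 1
  simp only [map_mul, Complex.conj_I, Complex.conj_ofReal, map_ofNat]
  push_cast; ring

lemma zpow_e (c : ℤ) (u : ℝ) : (e u) ^ c = Complex.exp ((2 * Real.pi * Complex.I * c) * u) := by
  unfold e; rw [← Complex.exp_int_mul]; congr 1; push_cast; ring

lemma integral_e_zpow (c : ℤ) :
    ∫ u in Set.Icc (0:ℝ) 1, (e u) ^ c = if c = 0 then 1 else 0 := by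
  simp_rw [zpow_e]
  rcases eq_or_ne c 0 with h | h
  · simp [h, Real.volume_Icc]
  · have hc : (2 * Real.pi * Complex.I * c : ℂ) ≠ 0 := by
      refine mul_ne_zero (mul_ne_zero (mul_ne_zero two_ne_zero ?_) Complex.I_ne_zero) ?_
      · exact_mod_cast Real.pi_ne_zero
      · exact_mod_cast (Int.cast_ne_zero (α := ℂ)).mpr h
    rw [MeasureTheory.integral_Icc_eq_integral_Ioc, ← intervalIntegral.integral_of_le zero_le_one,
        integral_exp_mul_complex hc]
    have h1 : Complex.exp (2 * Real.pi * Complex.I * c * 1) = 1 := by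
      rw [mul_one, ← Complex.exp_int_mul_two_pi_mul_I c]; congr 1; push_cast; ring
    rw [mul_one] at h1
    simp [h1, if_neg h]


lemma measurableSet_Box (N : ℕ) : MeasurableSet (Box N) :=
  MeasurableSet.univ_pi fun _ => measurableSet_Icc

lemma isCompact_Box (N : ℕ) : IsCompact (Box N) := by
  have : Box N = Set.Icc (fun _ => 0) (fun _ => 1) := Set.pi_univ_Icc _ _
  rw [this]; exact isCompact_Icc

lemma box_prod_integral {N : ℕ} (f : Fin N → ℝ → ℂ) :
    ∫ s in Box N, ∏ k, f k (s k) = ∏ k, ∫ u in Set.Icc (0:ℝ) 1, f k u := by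
  rw [← integral_indicator (measurableSet_Box N)]
  have h : ∀ s : Fin N → ℝ, (Box N).indicator (fun s => ∏ k, f k (s k)) s
      = ∏ k, (Set.Icc (0:ℝ) 1).indicator (f k) (s k) := by
    intro s
    by_cases hs : s ∈ Box N
    · rw [Set.indicator_of_mem hs]
      exact Finset.prod_congr rfl fun k _ =>
        (Set.indicator_of_mem (hs k (Set.mem_univ k)) _).symm
    · rw [Set.indicator_of_notMem hs]
      rw [Box, Set.mem_pi] at hs
      push_neg at hs
      obtain ⟨k, -, hk⟩ := hs
      exact (Finset.prod_eq_zero (Finset.mem_univ k)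
        (Set.indicator_of_notMem hk _)).symm
  simp_rw [h]
  rw [MeasureTheory.integral_fintype_prod_volume_eq_prod
    (fun k => (Set.Icc (0:ℝ) 1).indicator (f k))]
  exact Finset.prod_congr rfl fun k _ => integral_indicator measurableSet_Icc

lemma count_filter_eq {N p : ℕ} (i j : Fin p → Fin N) :
    (Finset.univ.val.map i = Finset.univ.val.map j) ↔
      ∀ k, (Finset.univ.filter fun r => i r = k).card
          = (Finset.univ.filter fun r => j r = k).card := by
  have hcount : ∀ (f : Fin p → Fin N) (k : Fin N),
      Multiset.count k (Finset.univ.val.map f)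
        = (Finset.univ.filter fun r => f r = k).card := by
    intro f k
    rw [Multiset.count_map]
    simp only [Finset.card, Finset.filter_val, eq_comm]
  rw [Multiset.ext]
  constructor <;> intro h k <;> have := h k <;> simp_all [hcount]

lemma key_integral {N p : ℕ} (i j : Fin p → Fin N) :
    (∫ s in Box N, (∏ r, e (s (i r))) * ∏ r, e (-(s (j r)))) =
      if Finset.univ.val.map i = Finset.univ.val.map j then 1 else 0 := by
  have hfib : ∀ (f : Fin p → Fin N) (g : ℝ → ℂ) (s : Fin N → ℝ),
      (∏ r, g (s (f r)))
        = ∏ k, g (s k) ^ ((Finset.univ.filter fun r => f r = k).card) := by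
    intro f g s
    rw [← Finset.prod_fiberwise' Finset.univ f (fun k => g (s k))]
    exact Finset.prod_congr rfl fun k _ => Finset.prod_const _
  have hmain : ∀ s : Fin N → ℝ, (∏ r, e (s (i r))) * ∏ r, e (-(s (j r)))
      = ∏ k, (e (s k)) ^ ((((Finset.univ.filter fun r => i r = k).card : ℤ))
          - ((Finset.univ.filter fun r => j r = k).card : ℤ)) := by
    intro s
    rw [hfib i e s, hfib j (fun u => e (-u)) s, ← Finset.prod_mul_distrib]
    refine Finset.prod_congr rfl fun k _ => ?_
    have h0 : e (s k) ≠ 0 := e_ne_zero _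
    rw [e_neg, inv_pow, ← zpow_natCast (e (s k)),
      ← zpow_natCast (e (s k)) ((Finset.univ.filter fun r => j r = k).card),
      ← zpow_neg, ← zpow_add₀ h0, sub_eq_add_neg]
  simp_rw [hmain]
  rw [box_prod_integral (fun k u => (e u) ^ ((((Finset.univ.filter fun r => i r = k).card : ℤ))
      - ((Finset.univ.filter fun r => j r = k).card : ℤ)))]
  simp_rw [integral_e_zpow]
  have hb : (∏ k, if ((((Finset.univ.filter fun r => i r = k).card : ℤ)
        - ((Finset.univ.filter fun r => j r = k).card : ℤ)) = 0) then (1:ℂ) else 0)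
      = if (∀ k, (((Finset.univ.filter fun r => i r = k).card : ℤ)
        - ((Finset.univ.filter fun r => j r = k).card : ℤ)) = 0) then 1 else 0 := by
    split_ifs with h
    · exact Finset.prod_eq_one fun k _ => by rw [if_pos (h k)]
    · push_neg at h
      obtain ⟨k, hk⟩ := h
      exact Finset.prod_eq_zero (Finset.mem_univ k) (by rw [if_neg hk])
  rw [hb]
  refine if_congr ?_ rfl rfl
  rw [count_filter_eq i j]
  constructor <;> intro h k <;> have := h k <;> omega

lemma hpow_expand {N p : ℕ} (g : Fin N → Fin N → ℂ) :
    (∑ a, ∑ b, g a b) ^ p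
      = ∑ i : Fin p → Fin N, ∑ x : Fin p → Fin N, ∏ r, g (i r) (x r) := by
  calc (∑ a, ∑ b, g a b) ^ p = ∏ _r : Fin p, (∑ a, ∑ b, g a b) := by
        rw [Finset.prod_const, Finset.card_univ, Fintype.card_fin]
    _ = ∑ i : Fin p → Fin N, ∏ r, ∑ b, g (i r) b := by
        rw [Finset.prod_univ_sum, Fintype.piFinset_univ]
    _ = ∑ i : Fin p → Fin N, ∑ x : Fin p → Fin N, ∏ r, g (i r) (x r) :=
        Finset.sum_congr rfl fun i _ => by rw [Finset.prod_univ_sum, Fintype.piFinset_univ]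

lemma expand_lemma {N p : ℕ} (H : Matrix (Fin N) (Fin N) ℂ)
    (hHconj : ∀ a b, (starRingEnd ℂ) (H a b) = (H a b)⁻¹) (s t : Fin N → ℝ) :
    ((‖∑ i, ∑ j, e (s i) * e (t j) * H i j‖ ^ (2 * p) : ℝ) : ℂ)
      = ∑ i : Fin p → Fin N, ∑ j : Fin p → Fin N, ∑ x : Fin p → Fin N, ∑ y : Fin p → Fin N,
          ((∏ r, H (i r) (x r)) * (∏ r, (H (j r) (y r))⁻¹))
            * ((∏ r, e (s (i r))) * ∏ r, e (-(s (j r))))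
            * ((∏ r, e (t (x r))) * ∏ r, e (-(t (y r)))) := by
  set z := ∑ a, ∑ b, e (s a) * e (t b) * H a b with hz
  have hsq : ((‖z‖ : ℂ)) ^ 2 = z * (starRingEnd ℂ) z := by
    rw [Complex.mul_conj]
    norm_cast
    exact Complex.sq_norm z
  have hcast : ((‖z‖ ^ (2 * p) : ℝ) : ℂ) = z ^ p * ((starRingEnd ℂ) z) ^ p := by
    push_cast
    rw [pow_mul, hsq, mul_pow]
  have hconjz : (starRingEnd ℂ) z = ∑ a, ∑ b, e (-(s a)) * e (-(t b)) * (H a b)⁻¹ := by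
    rw [hz]
    simp only [map_sum, map_mul, conj_e, hHconj]
  rw [hcast, hconjz, hpow_expand, hpow_expand, Finset.sum_mul_sum]
  refine Finset.sum_congr rfl fun i _ => Finset.sum_congr rfl fun j _ => ?_
  rw [Finset.sum_mul_sum]
  refine Finset.sum_congr rfl fun x _ => Finset.sum_congr rfl fun y _ => ?_
  rw [Finset.prod_mul_distrib, Finset.prod_mul_distrib, Finset.prod_mul_distrib,
    Finset.prod_mul_distrib]
  ring

/-- Moment formula for the glow of a unimodular matrix `H ∈ M_N(𝕋)`: with
`Ω(a,b) = ∑ a_i b_j H_{ij}` and `(a,b)` Haar-uniform on `𝕋^N × 𝕋^N`,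
`∫ |Ω|^{2p}` equals the sum over multi-indices `i,j,x,y ∈ {1,…,N}^p` with
`[i]=[j]` and `[x]=[y]` as multisets of `(H_{i₁x₁}⋯H_{i_px_p})/(H_{j₁y₁}⋯H_{j_py_p})`. -/
theorem complex_glow_moment_formula
    (N p : ℕ) (H : Matrix (Fin N) (Fin N) ℂ)
    (hH : ∀ i j, ‖H i j‖ = 1) :
    (∫ s in Box N, ∫ t in Box N,
        ((‖∑ i, ∑ j, e (s i) * e (t j) * H i j‖ ^ (2 * p) : ℝ) : ℂ)) =
      ∑ i : Fin p → Fin N, ∑ j : Fin p → Fin N,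
        ∑ x : Fin p → Fin N, ∑ y : Fin p → Fin N,
          if Finset.univ.val.map i = Finset.univ.val.map j ∧
              Finset.univ.val.map x = Finset.univ.val.map y then
            (∏ r, H (i r) (x r)) / ∏ r, H (j r) (y r)
          else 0 := by
  classical
  have hHconj : ∀ a b, (starRingEnd ℂ) (H a b) = (H a b)⁻¹ := by
    intro a b
    have h1 : H a b * (starRingEnd ℂ) (H a b) = 1 := by
      rw [Complex.mul_conj, ← Complex.sq_norm, hH]
      norm_num
    exact (inv_eq_of_mul_eq_one_right h1).symm
  set Q := ((Fin p → Fin N) × (Fin p → Fin N) × (Fin p → Fin N) × (Fin p → Fin N)) with hQ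
  set S : (Fin p → Fin N) → (Fin p → Fin N) → (Fin N → ℝ) → ℂ :=
    fun a b w => (∏ r, e (w (a r))) * ∏ r, e (-(w (b r))) with hSdef
  have hScont : ∀ (a b : Fin p → Fin N), Continuous (S a b) := by
    intro a b; rw [hSdef]; fun_prop
  set C : Q → ℂ := fun q => (∏ r, H (q.1 r) (q.2.2.1 r)) * (∏ r, (H (q.2.1 r) (q.2.2.2 r))⁻¹)
    with hCdef
  set D2 : Q → ℂ := fun q =>
    if Finset.univ.val.map q.2.2.1 = Finset.univ.val.map q.2.2.2 then 1 else 0 with hD2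
  set D1 : Q → ℂ := fun q =>
    if Finset.univ.val.map q.1 = Finset.univ.val.map q.2.1 then 1 else 0 with hD1
  have flat : ∀ (g : (Fin p → Fin N) → (Fin p → Fin N) → (Fin p → Fin N) → (Fin p → Fin N) → ℂ),
      (∑ q : Q, g q.1 q.2.1 q.2.2.1 q.2.2.2) = ∑ i, ∑ j, ∑ x, ∑ y, g i j x y := by
    intro g
    rw [Fintype.sum_prod_type]
    refine Finset.sum_congr rfl fun i _ => ?_
    rw [Fintype.sum_prod_type]
    refine Finset.sum_congr rfl fun j _ => ?_
    rw [Fintype.sum_prod_type]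
  calc (∫ s in Box N, ∫ t in Box N,
        ((‖∑ i, ∑ j, e (s i) * e (t j) * H i j‖ ^ (2 * p) : ℝ) : ℂ))
      = ∫ s in Box N, ∑ q : Q, (C q * D2 q) * S q.1 q.2.1 s := by
        refine setIntegral_congr_fun (measurableSet_Box N) fun s _ => ?_
        calc (∫ t in Box N,
              ((‖∑ i, ∑ j, e (s i) * e (t j) * H i j‖ ^ (2 * p) : ℝ) : ℂ))
            = ∫ t in Box N, ∑ q : Q, (C q * S q.1 q.2.1 s) * S q.2.2.1 q.2.2.2 t := by
              refine setIntegral_congr_fun (measurableSet_Box N) fun t _ => ?_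
              rw [expand_lemma H hHconj s t]
              exact (flat fun i j x y =>
                ((∏ r, H (i r) (x r)) * (∏ r, (H (j r) (y r))⁻¹))
                  * ((∏ r, e (s (i r))) * ∏ r, e (-(s (j r))))
                  * ((∏ r, e (t (x r))) * ∏ r, e (-(t (y r))))).symm
          _ = ∑ q : Q, ∫ t in Box N, (C q * S q.1 q.2.1 s) * S q.2.2.1 q.2.2.2 t := by
              refine integral_finset_sum _ fun q _ => ?_
              exact (continuous_const.mul (hScont _ _)).continuousOn.integrableOn_compact
                (isCompact_Box N)
          _ = ∑ q : Q, (C q * D2 q) * S q.1 q.2.1 s := by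
              refine Finset.sum_congr rfl fun q _ => ?_
              rw [MeasureTheory.integral_const_mul, hSdef]
              simp only []
              rw [key_integral q.2.2.1 q.2.2.2, hD2]
              ring
    _ = ∑ q : Q, ∫ s in Box N, (C q * D2 q) * S q.1 q.2.1 s := by
        refine integral_finset_sum _ fun q _ => ?_
        exact (continuous_const.mul (hScont _ _)).continuousOn.integrableOn_compact
          (isCompact_Box N)
    _ = ∑ q : Q, (C q * D2 q) * D1 q := by
        refine Finset.sum_congr rfl fun q _ => ?_
        rw [MeasureTheory.integral_const_mul, hSdef]
        simp only []
        rw [key_integral q.1 q.2.1, hD1]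
    _ = ∑ i : Fin p → Fin N, ∑ j : Fin p → Fin N,
        ∑ x : Fin p → Fin N, ∑ y : Fin p → Fin N,
          if Finset.univ.val.map i = Finset.univ.val.map j ∧
              Finset.univ.val.map x = Finset.univ.val.map y then
            (∏ r, H (i r) (x r)) / ∏ r, H (j r) (y r)
          else 0 := by
        rw [← flat fun i j x y =>
          if Finset.univ.val.map i = Finset.univ.val.map j ∧
              Finset.univ.val.map x = Finset.univ.val.map y then
            (∏ r, H (i r) (x r)) / ∏ r, H (j r) (y r)
          else 0]
        refine Finset.sum_congr rfl fun q _ => ?_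
        simp only [hCdef, hD1, hD2]
        by_cases h1 : Finset.univ.val.map q.1 = Finset.univ.val.map q.2.1
        · by_cases h2 : Finset.univ.val.map q.2.2.1 = Finset.univ.val.map q.2.2.2
          · rw [if_pos h1, if_pos h2, if_pos ⟨h1, h2⟩, div_eq_mul_inv,
              Finset.prod_inv_distrib]; ring
          · rw [if_pos h1, if_neg h2, if_neg (fun h => h2 h.2)]; ring
        · rw [if_neg h1, if_neg (fun h : _ ∧ _ => h1 h.1)]; ring
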